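/- arXiv:2601.23054 — 2 statements merged into one kernel-verified Lean document; each statement's English description precedes it below -/
import Mathlib

section
/- The commutator subgroup [H,H] is generated by the set { [R_a, t] : a ∈ A, t ∈ Q } ∪ { [t_1, t_2] : t_1, t_2 ∈ Q }, where [x,y] = x y x⁻¹ y⁻¹ and R_a is the rotation by a. -/
open Equiv

open scoped commutatorElement

noncomputable section

/-- The circle `ℝ/ℤ`. -/
abbrev Circ : Type := AddCircle (1 : ℝ)

/-- Rotation by `a` : the bijection `x ↦ x + a` of the circle. -/
def Rot (a : Circ) : Equiv.Perm Circ := Equiv.addRight a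

/-- The subgroup `{ p/q mod 1 : p ∈ ℤ }` of the circle. -/
def RatPts (q : ℕ) : AddSubgroup Circ :=
  AddSubgroup.zmultiples (((q : ℝ)⁻¹ : ℝ) : Circ)

/-- The group of bijections of the circle all of whose displacements lie in `RatPts q`. -/
def Delta (q : ℕ) : Subgroup (Equiv.Perm Circ) where
  carrier := {f | ∀ x : Circ, f x - x ∈ RatPts q}
  one_mem' := by intro x; simpa using zero_mem (RatPts q)
  mul_mem' := by
    intro f g hf hg x
    have h1 : f (g x) - g x ∈ RatPts q := hf (g x)
    have h2 : g x - x ∈ RatPts q := hg x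
    have h3 := add_mem h1 h2
    simpa [Equiv.Perm.mul_apply, sub_add_sub_cancel] using h3
  inv_mem' := by
    intro f hf x
    have h1 : f (f⁻¹ x) - f⁻¹ x ∈ RatPts q := hf (f⁻¹ x)
    rw [Equiv.Perm.coe_inv, Equiv.apply_symm_apply] at h1
    simpa using neg_mem h1

/-- The subgroup `A` of the circle generated by the classes of `α₁, …, α_s`. -/
def Agrp (s : ℕ) (α : Fin s → ℝ) : AddSubgroup Circ :=
  AddSubgroup.closure (Set.range fun i => ((α i : ℝ) : Circ))

/-- The group `H` generated by the rotations `R_{αᵢ}` and the maps `E_{τⱼ}`. -/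
def Hgrp (s m q : ℕ) (α : Fin s → ℝ) (τs : Fin m → Equiv.Perm (Fin q))
    (E : Equiv.Perm (Fin q) → Equiv.Perm Circ) : Subgroup (Equiv.Perm Circ) :=
  Subgroup.closure ((Set.range fun i => Rot ((α i : ℝ) : Circ)) ∪ (Set.range fun j => E (τs j)))

/-- The group `Q` generated by the maps `E_{τⱼ}`. -/
def Qgrp (m q : ℕ) (τs : Fin m → Equiv.Perm (Fin q))
    (E : Equiv.Perm (Fin q) → Equiv.Perm Circ) : Subgroup (Equiv.Perm Circ) :=
  Subgroup.closure (Set.range fun j => E (τs j))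

/-- The subgroup `𝔖(Q)` of `S_q` generated by `τ₁, …, τ_m`. -/
def SQgrp (m q : ℕ) (τs : Fin m → Equiv.Perm (Fin q)) : Subgroup (Equiv.Perm (Fin q)) :=
  Subgroup.closure (Set.range τs)

/-- The subgroup `W = ⟨σ, τ₁, …, τ_m⟩` of `S_q`, where `σ` is the `q`-cycle. -/
def Wgrp (m q : ℕ) (τs : Fin m → Equiv.Perm (Fin q)) : Subgroup (Equiv.Perm (Fin q)) :=
  Subgroup.closure ({finRotate q} ∪ Set.range τs)

lemma rot_add (a b : Circ) : Rot (a + b) = Rot a * Rot b := by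
  ext x
  simp only [Rot, Equiv.Perm.mul_apply, Equiv.coe_addRight]
  abel

lemma rot_zero : Rot (0 : Circ) = 1 := by
  ext x; simp [Rot]

lemma rot_neg (a : Circ) : Rot (-a) = (Rot a)⁻¹ := by
  apply eq_inv_of_mul_eq_one_left
  rw [← rot_add, neg_add_cancel, rot_zero]

lemma rot_comm (a b : Circ) : Rot a * Rot b = Rot b * Rot a := by
  rw [← rot_add, ← rot_add, add_comm]

theorem stmt_5
    (s m q : ℕ) (hs : 1 ≤ s) (hm : 1 ≤ m) (hq : 2 ≤ q)
    (α : Fin s → ℝ) (hα : LinearIndependent ℚ (Fin.cons (1 : ℝ) α))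
    (τs : Fin m → Equiv.Perm (Fin q))
    (E : Equiv.Perm (Fin q) → Equiv.Perm Circ)
    (hE : ∀ (τ : Equiv.Perm (Fin q)) (i : Fin q) (t : ℝ), 0 ≤ t → t < 1 / q →
      E τ ((((i : ℕ) : ℝ) / q + t : ℝ) : Circ) = ((((τ i : ℕ) : ℝ) / q + t : ℝ) : Circ))
    : ⁅Hgrp s m q α τs E, Hgrp s m q α τs E⁆ =
      Subgroup.closure
        ({f : Equiv.Perm Circ | ∃ a ∈ Agrp s α, ∃ t ∈ Qgrp m q τs E, f = ⁅Rot a, t⁆} ∪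
         {f : Equiv.Perm Circ | ∃ t₁ ∈ Qgrp m q τs E, ∃ t₂ ∈ Qgrp m q τs E, f = ⁅t₁, t₂⁆}) := by
  set A := Agrp s α with hA
  set Qg := Qgrp m q τs E with hQ
  set Hg := Hgrp s m q α τs E with hHdef
  set N := Subgroup.closure
        ({f : Equiv.Perm Circ | ∃ a ∈ A, ∃ t ∈ Qg, f = ⁅Rot a, t⁆} ∪
         {f : Equiv.Perm Circ | ∃ t₁ ∈ Qg, ∃ t₂ ∈ Qg, f = ⁅t₁, t₂⁆}) with hNdef
  have memS1 : ∀ a ∈ A, ∀ t ∈ Qg, ⁅Rot a, t⁆ ∈ N := fun a ha t ht =>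
    Subgroup.subset_closure (Or.inl ⟨a, ha, t, ht, rfl⟩)
  have memS2 : ∀ t₁ ∈ Qg, ∀ t₂ ∈ Qg, ⁅t₁, t₂⁆ ∈ N := fun t₁ h₁ t₂ h₂ =>
    Subgroup.subset_closure (Or.inr ⟨t₁, h₁, t₂, h₂, rfl⟩)
  have commQ : ∀ t₁ ∈ Qg, ∀ t₂ ∈ Qg, ⁅t₁, t₂⁆ ∈ Qg := fun t₁ h₁ t₂ h₂ => by
    rw [commutatorElement_def]
    exact mul_mem (mul_mem (mul_mem h₁ h₂) (inv_mem h₁)) (inv_mem h₂)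
  have rotA : ∀ a ∈ A, Rot a ∈ Hg := by
    intro a ha
    induction ha using AddSubgroup.closure_induction with
    | mem x hx =>
      obtain ⟨i, rfl⟩ := hx
      exact Subgroup.subset_closure (Or.inl ⟨i, rfl⟩)
    | zero => rw [rot_zero]; exact one_mem _
    | add x y _ _ ih₁ ih₂ => rw [rot_add]; exact mul_mem ih₁ ih₂
    | neg x _ ih => rw [rot_neg]; exact inv_mem ih
  have QleH : Qg ≤ Hg := Subgroup.closure_mono Set.subset_union_right
  -- conjugation by an element of Q preserves N
  have conjQ : ∀ qe ∈ Qg, ∀ n ∈ N, qe * n * qe⁻¹ ∈ N := by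
    intro qe hqe n hn
    induction hn using Subgroup.closure_induction with
    | mem x hx =>
      rcases hx with ⟨a, ha, t, ht, rfl⟩ | ⟨t₁, h₁, t₂, h₂, rfl⟩
      · have key : qe * ⁅Rot a, t⁆ * qe⁻¹ = ⁅Rot a, qe⁆⁻¹ * ⁅Rot a, qe * t⁆ := by
          simp only [commutatorElement_def]; group
        rw [key]
        exact mul_mem (inv_mem (memS1 a ha qe hqe)) (memS1 a ha _ (mul_mem hqe ht))
      · have key : qe * ⁅t₁, t₂⁆ * qe⁻¹ = ⁅qe * t₁ * qe⁻¹, qe * t₂ * qe⁻¹⁆ := by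
          simp only [commutatorElement_def]; group
        rw [key]
        exact memS2 _ (mul_mem (mul_mem hqe h₁) (inv_mem hqe)) _
          (mul_mem (mul_mem hqe h₂) (inv_mem hqe))
    | one => simpa using one_mem N
    | mul x y _ _ ih₁ ih₂ =>
      have key : qe * (x * y) * qe⁻¹ = (qe * x * qe⁻¹) * (qe * y * qe⁻¹) := by group
      rw [key]; exact mul_mem ih₁ ih₂
    | inv x _ ih =>
      have key : qe * x⁻¹ * qe⁻¹ = (qe * x * qe⁻¹)⁻¹ := by group
      rw [key]; exact inv_mem ih
  -- conjugation by a rotation from A preserves N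
  have conjR : ∀ b ∈ A, ∀ n ∈ N, Rot b * n * (Rot b)⁻¹ ∈ N := by
    intro b hb n hn
    induction hn using Subgroup.closure_induction with
    | mem x hx =>
      rcases hx with ⟨a, ha, t, ht, rfl⟩ | ⟨t₁, h₁, t₂, h₂, rfl⟩
      · have key : Rot b * ⁅Rot a, t⁆ * (Rot b)⁻¹ = ⁅Rot (b + a), t⁆ * ⁅Rot b, t⁆⁻¹ := by
          rw [rot_add]; simp only [commutatorElement_def]; group
        rw [key]
        exact mul_mem (memS1 _ (add_mem hb ha) t ht) (inv_mem (memS1 b hb t ht))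
      · have key : Rot b * ⁅t₁, t₂⁆ * (Rot b)⁻¹ = ⁅Rot b, ⁅t₁, t₂⁆⁆ * ⁅t₁, t₂⁆ := by
          simp only [commutatorElement_def]; group
        rw [key]
        exact mul_mem (memS1 b hb _ (commQ t₁ h₁ t₂ h₂)) (memS2 t₁ h₁ t₂ h₂)
    | one => simpa using one_mem N
    | mul x y _ _ ih₁ ih₂ =>
      have key : Rot b * (x * y) * (Rot b)⁻¹
          = (Rot b * x * (Rot b)⁻¹) * (Rot b * y * (Rot b)⁻¹) := by group
      rw [key]; exact mul_mem ih₁ ih₂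
    | inv x _ ih =>
      have key : Rot b * x⁻¹ * (Rot b)⁻¹ = (Rot b * x * (Rot b)⁻¹)⁻¹ := by group
      rw [key]; exact inv_mem ih
  -- N is normalized by H
  have Nrm : ∀ h ∈ Hg, ∀ n ∈ N, h * n * h⁻¹ ∈ N := by
    intro h hh
    have : (∀ n ∈ N, h * n * h⁻¹ ∈ N) ∧ (∀ n ∈ N, h⁻¹ * n * h ∈ N) := by
      induction hh using Subgroup.closure_induction with
      | mem x hx =>
        rcases hx with ⟨i, rfl⟩ | ⟨j, rfl⟩
        · have hi : ((α i : ℝ) : Circ) ∈ A := AddSubgroup.subset_closure ⟨i, rfl⟩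
          refine ⟨conjR _ hi, ?_⟩
          intro n hn
          have key : (Rot ((α i : ℝ) : Circ))⁻¹ * n * Rot ((α i : ℝ) : Circ)
              = Rot (-((α i : ℝ) : Circ)) * n * (Rot (-((α i : ℝ) : Circ)))⁻¹ := by
            rw [rot_neg]; group
          rw [key]
          exact conjR _ (neg_mem hi) n hn
        · have hj : E (τs j) ∈ Qg := Subgroup.subset_closure ⟨j, rfl⟩
          refine ⟨conjQ _ hj, ?_⟩
          intro n hn
          have key : (E (τs j))⁻¹ * n * E (τs j)
              = (E (τs j))⁻¹ * n * ((E (τs j))⁻¹)⁻¹ := by group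
          rw [key]
          exact conjQ _ (inv_mem hj) n hn
      | one => constructor <;> (intro n hn; simpa using hn)
      | mul x y _ _ ih₁ ih₂ =>
        constructor
        · intro n hn
          have key : x * y * n * (x * y)⁻¹ = x * (y * n * y⁻¹) * x⁻¹ := by group
          rw [key]; exact ih₁.1 _ (ih₂.1 n hn)
        · intro n hn
          have key : (x * y)⁻¹ * n * (x * y) = y⁻¹ * (x⁻¹ * n * x) * y := by group
          rw [key]; exact ih₂.2 _ (ih₁.2 n hn)
      | inv x _ ih =>
        refine ⟨ih.2, ?_⟩
        intro n hn
        have key : x⁻¹⁻¹ * n * x⁻¹ = x * n * x⁻¹ := by group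
        rw [key]; exact ih.1 n hn
    exact this.1
  -- commutators of generators
  have genH : ∀ x ∈ ((Set.range fun i => Rot ((α i : ℝ) : Circ))
      ∪ (Set.range fun j => E (τs j))), x ∈ Hg := fun x hx => Subgroup.subset_closure hx
  have baseComm : ∀ x ∈ ((Set.range fun i => Rot ((α i : ℝ) : Circ))
      ∪ (Set.range fun j => E (τs j))),
      ∀ y ∈ ((Set.range fun i => Rot ((α i : ℝ) : Circ))
      ∪ (Set.range fun j => E (τs j))), ⁅x, y⁆ ∈ N := by
    rintro x (⟨i, rfl⟩ | ⟨j, rfl⟩) y (⟨i', rfl⟩ | ⟨j', rfl⟩)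
    · have : ⁅Rot ((α i : ℝ) : Circ), Rot ((α i' : ℝ) : Circ)⁆ = 1 :=
        commutatorElement_eq_one_iff_mul_comm.mpr (rot_comm _ _)
      rw [this]; exact one_mem N
    · exact memS1 _ (AddSubgroup.subset_closure ⟨i, rfl⟩) _ (Subgroup.subset_closure ⟨j', rfl⟩)
    · rw [← commutatorElement_inv]
      exact inv_mem (memS1 _ (AddSubgroup.subset_closure ⟨i', rfl⟩) _
        (Subgroup.subset_closure ⟨j, rfl⟩))
    · exact memS2 _ (Subgroup.subset_closure ⟨j, rfl⟩) _ (Subgroup.subset_closure ⟨j', rfl⟩)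
  have commGen : ∀ x ∈ ((Set.range fun i => Rot ((α i : ℝ) : Circ))
      ∪ (Set.range fun j => E (τs j))), ∀ g ∈ Hg, ⁅x, g⁆ ∈ N := by
    intro x hx g hg
    induction hg using Subgroup.closure_induction with
    | mem y hy => exact baseComm x hx y hy
    | one => rw [commutatorElement_one_right]; exact one_mem N
    | mul k₁ k₂ hk₁ _ ih₁ ih₂ =>
      have key : ⁅x, k₁ * k₂⁆ = ⁅x, k₁⁆ * (k₁ * ⁅x, k₂⁆ * k₁⁻¹) := by
        simp only [commutatorElement_def]; group
      rw [key]
      exact mul_mem ih₁ (Nrm k₁ hk₁ _ ih₂)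
    | inv k hk ih =>
      have key : ⁅x, k⁻¹⁆ = k⁻¹ * ⁅x, k⁆⁻¹ * k := by
        simp only [commutatorElement_def]; group
      rw [key]
      have hki : k⁻¹ ∈ Hg := inv_mem hk
      have : k⁻¹ * ⁅x, k⁆⁻¹ * (k⁻¹)⁻¹ ∈ N := Nrm k⁻¹ hki _ (inv_mem ih)
      simpa using this
  have commAll : ∀ g₁ ∈ Hg, ∀ g₂ ∈ Hg, ⁅g₁, g₂⁆ ∈ N := by
    intro g₁ hg₁ g₂ hg₂
    induction hg₁ using Subgroup.closure_induction with
    | mem x hx => exact commGen x hx g₂ hg₂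
    | one => rw [commutatorElement_one_left]; exact one_mem N
    | mul k₁ k₂ hk₁ _ ih₁ ih₂ =>
      have key : ⁅k₁ * k₂, g₂⁆ = (k₁ * ⁅k₂, g₂⁆ * k₁⁻¹) * ⁅k₁, g₂⁆ := by
        simp only [commutatorElement_def]; group
      rw [key]
      exact mul_mem (Nrm k₁ hk₁ _ ih₂) ih₁
    | inv k hk ih =>
      have key : ⁅k⁻¹, g₂⁆ = k⁻¹ * ⁅k, g₂⁆⁻¹ * (k⁻¹)⁻¹ := by
        simp only [commutatorElement_def]; group
      rw [key]
      exact Nrm k⁻¹ (inv_mem hk) _ (inv_mem ih)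
  apply le_antisymm
  · exact Subgroup.commutator_le.mpr commAll
  · rw [Subgroup.closure_le]
    rintro f (⟨a, ha, t, ht, rfl⟩ | ⟨t₁, h₁, t₂, h₂, rfl⟩)
    · exact Subgroup.commutator_mem_commutator (rotA a ha) (QleH ht)
    · exact Subgroup.commutator_mem_commutator (QleH h₁) (QleH h₂)
end
end

section
/- In the symmetric group S_q, let W = ⟨σ, 𝔖(Q)⟩. Then the commutator subgroup [W,W] equals the subgroup generated by the set { [σ^p, t] : 0 ≤ p ≤ q−1, t ∈ 𝔖(Q) } ∪ { [t_1, t_2] : t_1, t_2 ∈ 𝔖(Q) }, where [x,y] = x y x⁻¹ y⁻¹. -/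
open Equiv

open scoped commutatorElement

noncomputable section

theorem conj_closure_mem_aux9 {G : Type*} [Group G] (S : Set G) (g : G)
    (h : ∀ s ∈ S, g * s * g⁻¹ ∈ Subgroup.closure S) :
    ∀ n ∈ Subgroup.closure S, g * n * g⁻¹ ∈ Subgroup.closure S := by
  intro n hn
  induction hn using Subgroup.closure_induction with
  | mem x hx => exact h x hx
  | one => simpa using Subgroup.one_mem _
  | mul x y hx hy ihx ihy =>
      have : g * (x * y) * g⁻¹ = (g * x * g⁻¹) * (g * y * g⁻¹) := by group
      rw [this]; exact mul_mem ihx ihy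
  | inv x hx ihx =>
      have : g * x⁻¹ * g⁻¹ = (g * x * g⁻¹)⁻¹ := by group
      rw [this]; exact inv_mem ihx

theorem stmt_9
    (q : ℕ) (hq : 2 ≤ q)
    (SQ : Subgroup (Equiv.Perm (Fin q)))
    (W : Subgroup (Equiv.Perm (Fin q)))
    (hW : W = Subgroup.closure ({finRotate q} ∪ (SQ : Set (Equiv.Perm (Fin q))))) :
    ⁅W, W⁆ = Subgroup.closure
      ({π : Equiv.Perm (Fin q) | ∃ p < q, ∃ t ∈ SQ, π = ⁅finRotate q ^ p, t⁆} ∪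
       {π : Equiv.Perm (Fin q) | ∃ t₁ ∈ SQ, ∃ t₂ ∈ SQ, π = ⁅t₁, t₂⁆}) := by
  set σ : Equiv.Perm (Fin q) := finRotate q with hσ
  set S : Set (Equiv.Perm (Fin q)) :=
    ({π : Equiv.Perm (Fin q) | ∃ p < q, ∃ t ∈ SQ, π = ⁅finRotate q ^ p, t⁆} ∪
     {π : Equiv.Perm (Fin q) | ∃ t₁ ∈ SQ, ∃ t₂ ∈ SQ, π = ⁅t₁, t₂⁆}) with hS
  set N : Subgroup (Equiv.Perm (Fin q)) := Subgroup.closure S with hN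
  have hq0 : 0 < q := by omega
  have hord : orderOf σ = q := by
    rw [hσ, (isCycle_finRotate_of_le hq).orderOf, support_finRotate_of_le hq,
      Finset.card_univ, Fintype.card_fin]
  -- σ ∈ W and SQ ≤ W
  have hσW : σ ∈ W := by
    rw [hW]; exact Subgroup.subset_closure (Or.inl rfl)
  have hSQW : ∀ t ∈ SQ, t ∈ W := by
    intro t ht; rw [hW]; exact Subgroup.subset_closure (Or.inr ht)
  -- commutators ⁅σ^p, t⁆ for arbitrary p are in N
  have hc : ∀ (p : ℕ), ∀ t ∈ SQ, ⁅σ ^ p, t⁆ ∈ N := by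
    intro p t ht
    have h1 : σ ^ p = σ ^ (p % q) := by
      conv_lhs => rw [← pow_mod_orderOf]
      rw [hord]
    rw [h1]
    exact Subgroup.subset_closure (Or.inl ⟨p % q, Nat.mod_lt _ hq0, t, ht, rfl⟩)
  have hd : ∀ t₁ ∈ SQ, ∀ t₂ ∈ SQ, ⁅t₁, t₂⁆ ∈ N := by
    intro t₁ h₁ t₂ h₂
    exact Subgroup.subset_closure (Or.inr ⟨t₁, h₁, t₂, h₂, rfl⟩)
  -- conjugation by elements of SQ preserves N
  have hconjSQ : ∀ t₀ ∈ SQ, ∀ n ∈ N, t₀ * n * t₀⁻¹ ∈ N := by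
    intro t₀ ht₀
    apply conj_closure_mem_aux9
    intro s hs
    rcases hs with ⟨p, _, t, ht, rfl⟩ | ⟨t₁, h₁, t₂, h₂, rfl⟩
    · have key : t₀ * ⁅σ ^ p, t⁆ * t₀⁻¹ = ⁅σ ^ p, t₀⁆⁻¹ * ⁅σ ^ p, t₀ * t⁆ := by
        simp only [commutatorElement_def]; group
      rw [key]
      exact mul_mem (inv_mem (hc p t₀ ht₀)) (hc p (t₀ * t) (mul_mem ht₀ ht))
    · have key : t₀ * ⁅t₁, t₂⁆ * t₀⁻¹ = ⁅t₀ * t₁ * t₀⁻¹, t₀ * t₂ * t₀⁻¹⁆ := by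
        simp only [commutatorElement_def]; group
      rw [key]
      exact hd _ (mul_mem (mul_mem ht₀ h₁) (inv_mem ht₀)) _
        (mul_mem (mul_mem ht₀ h₂) (inv_mem ht₀))
  -- conjugation by σ preserves N
  have hconjσ : ∀ n ∈ N, σ * n * σ⁻¹ ∈ N := by
    apply conj_closure_mem_aux9
    intro s hs
    rcases hs with ⟨p, _, t, ht, rfl⟩ | ⟨t₁, h₁, t₂, h₂, rfl⟩
    · have key : σ * ⁅σ ^ p, t⁆ * σ⁻¹ = ⁅σ ^ (p + 1), t⁆ * ⁅σ ^ 1, t⁆⁻¹ := by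
        simp only [commutatorElement_def, pow_succ, pow_one]; group
      rw [key]
      exact mul_mem (hc (p + 1) t ht) (inv_mem (hc 1 t ht))
    · have key : σ * ⁅t₁, t₂⁆ * σ⁻¹ =
          ⁅σ ^ 1, t₁ * t₂⁆ * ((t₁ * t₂) * ⁅σ ^ 1, t₁⁻¹ * t₂⁻¹⁆ * (t₁ * t₂)⁻¹) * ⁅t₁, t₂⁆ := by
        simp only [commutatorElement_def, pow_one]; group
      rw [key]
      exact mul_mem (mul_mem (hc 1 _ (mul_mem h₁ h₂))
        (hconjSQ _ (mul_mem h₁ h₂) _ (hc 1 _ (mul_mem (inv_mem h₁) (inv_mem h₂)))))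
        (hd _ h₁ _ h₂)
  -- conjugation by σ^k preserves N
  have hconjσk : ∀ (k : ℕ), ∀ n ∈ N, σ ^ k * n * (σ ^ k)⁻¹ ∈ N := by
    intro k
    induction k with
    | zero => intro n hn; simpa using hn
    | succ k ih =>
        intro n hn
        have : σ ^ (k + 1) * n * (σ ^ (k + 1))⁻¹
            = σ * (σ ^ k * n * (σ ^ k)⁻¹) * σ⁻¹ := by
          rw [pow_succ']; group
        rw [this]
        exact hconjσ _ (ih n hn)
  have hσinv : σ⁻¹ = σ ^ (q - 1) := by
    have h1 : σ ^ q = 1 := by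
      have := pow_orderOf_eq_one σ
      rwa [hord] at this
    have h2 : σ ^ (q - 1) * σ = 1 := by
      rw [← pow_succ]
      have h3 : q - 1 + 1 = q := by omega
      rw [h3, h1]
    exact (eq_inv_of_mul_eq_one_left h2).symm
  -- W normalizes N
  have hnorm : ∀ w ∈ W, ∀ n ∈ N, w * n * w⁻¹ ∈ N := by
    have : W ≤ Subgroup.normalizer (N : Set (Equiv.Perm (Fin q))) := by
      rw [hW]
      apply Subgroup.closure_le _ |>.mpr
      rintro g (rfl | hg)
      · rw [SetLike.mem_coe, Subgroup.mem_normalizer_iff]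
        intro n
        constructor
        · intro hn; exact hconjσ n hn
        · intro hn
          have := hconjσk (q - 1) _ hn
          rw [← hσinv] at this
          have h2 : σ⁻¹ * (σ * n * σ⁻¹) * σ⁻¹⁻¹ = n := by group
          rwa [h2] at this
      · rw [SetLike.mem_coe, Subgroup.mem_normalizer_iff]
        intro n
        constructor
        · intro hn; exact hconjSQ g hg n hn
        · intro hn
          have := hconjSQ g⁻¹ (inv_mem hg) _ hn
          have h2 : g⁻¹ * (g * n * g⁻¹) * g⁻¹⁻¹ = n := by group
          rwa [h2] at this
    intro w hw n hn
    exact (Subgroup.mem_normalizer_iff.mp (this hw) n).mp hn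
  apply le_antisymm
  · -- ⁅W,W⁆ ≤ N
    rw [Subgroup.commutator_le]
    intro g hg h hh
    -- first, commutators of a fixed generator with everything in W
    have base : ∀ g₀ ∈ ({σ} ∪ (SQ : Set (Equiv.Perm (Fin q))) : Set (Equiv.Perm (Fin q))),
        ∀ h ∈ W, ⁅g₀, h⁆ ∈ N := by
      rintro g₀ hg₀ h hh
      rw [hW] at hh
      induction hh using Subgroup.closure_induction with
      | mem x hx =>
          rcases hg₀ with hg₀ | hg₀
          · rw [Set.mem_singleton_iff] at hg₀
            subst hg₀
            rcases hx with hx | hx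
            · rw [Set.mem_singleton_iff] at hx
              subst hx
              have e : ⁅σ, σ⁆ = (1 : Equiv.Perm (Fin q)) := by
                simp [commutatorElement_def]
              rw [e]; exact one_mem N
            · have := hc 1 x hx; rwa [pow_one] at this
          · rcases hx with hx | hx
            · rw [Set.mem_singleton_iff] at hx
              subst hx
              have key : ⁅g₀, σ⁆ = ⁅σ ^ 1, g₀⁆⁻¹ := by
                simp only [commutatorElement_def, pow_one]; group
              rw [key]; exact inv_mem (hc 1 g₀ hg₀)
            · exact hd _ hg₀ _ hx
      | one => simpa using one_mem N
      | mul x y hx hy ihx ihy =>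
          have key : ⁅g₀, x * y⁆ = ⁅g₀, x⁆ * (x * ⁅g₀, y⁆ * x⁻¹) := by
            simp only [commutatorElement_def]; group
          rw [key]
          have hxW : x ∈ W := by rw [hW]; exact hx
          exact mul_mem ihx (hnorm x hxW _ ihy)
      | inv x hx ihx =>
          have key : ⁅g₀, x⁻¹⁆ = x⁻¹ * ⁅g₀, x⁆⁻¹ * x⁻¹⁻¹ := by
            simp only [commutatorElement_def]; group
          rw [key]
          have hxW : x⁻¹ ∈ W := by rw [hW]; exact inv_mem hx
          exact hnorm _ hxW _ (inv_mem ihx)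
    -- now induct over g
    rw [hW] at hg
    induction hg using Subgroup.closure_induction with
    | mem x hx => exact base x hx h hh
    | one => simpa using one_mem N
    | mul x y hx hy ihx ihy =>
        have key : ⁅x * y, h⁆ = (x * ⁅y, h⁆ * x⁻¹) * ⁅x, h⁆ := by
          simp only [commutatorElement_def]; group
        rw [key]
        have hxW : x ∈ W := by rw [hW]; exact hx
        exact mul_mem (hnorm x hxW _ ihy) ihx
    | inv x hx ihx =>
        have key : ⁅x⁻¹, h⁆ = x⁻¹ * ⁅x, h⁆⁻¹ * x⁻¹⁻¹ := by
          simp only [commutatorElement_def]; group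
        rw [key]
        have hxW : x⁻¹ ∈ W := by rw [hW]; exact inv_mem hx
        exact hnorm _ hxW _ (inv_mem ihx)
  · -- N ≤ ⁅W,W⁆
    apply Subgroup.closure_le _ |>.mpr
    rintro π (⟨p, _, t, ht, rfl⟩ | ⟨t₁, h₁, t₂, h₂, rfl⟩)
    · exact Subgroup.commutator_mem_commutator (pow_mem hσW p) (hSQW t ht)
    · exact Subgroup.commutator_mem_commutator (hSQW t₁ h₁) (hSQW t₂ h₂)
end
end
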